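/- Let s₁,…,s₆ be positive real numbers with s₁+s₂+s₃+s₄+s₅+s₆ = π and s₁ ≤ s₃ ≤ s₅. Suppose there is a real number H such that cot A_t + cot B_t + cot C_t = H for every t = 1,…,6 (with A_t, B_t, C_t the cumulative half-arc sums defined in the context). Then s₁ = s₃ = s₅ and s₂ = s₄ = s₆; in particular cot A_t, cot B_t, cot C_t are independent of t (the hexagon cut out on the normal geodesic is a parallel hexagon). [Proposition 3.3 of the paper, which is the core of Theorem 1.1(i): a closed CMC Dupin hypersurface with g = 3 is isoparametric.] -/

import Mathlib

open Real

private lemma cot_diff {a b : ℝ} (ha : Real.sin a ≠ 0) (hb : Real.sin b ≠ 0) :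
    Real.cot a - Real.cot b = Real.sin (b - a) / (Real.sin a * Real.sin b) := by
  rw [Real.cot_eq_cos_div_sin, Real.cot_eq_cos_div_sin, Real.sin_sub]
  field_simp

private lemma cot_le_cot' {a b : ℝ} (ha : 0 < a) (hb : b < π) (hab : a ≤ b) :
    Real.cot b ≤ Real.cot a := by
  have hsa : 0 < Real.sin a := Real.sin_pos_of_pos_of_lt_pi ha (lt_of_le_of_lt hab hb)
  have hsb : 0 < Real.sin b := Real.sin_pos_of_pos_of_lt_pi (lt_of_lt_of_le ha hab) hb
  have hs : 0 ≤ Real.sin (b - a) :=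
    Real.sin_nonneg_of_nonneg_of_le_pi (by linarith) (by linarith [Real.pi_pos])
  have := cot_diff (ne_of_gt hsa) (ne_of_gt hsb)
  nlinarith [div_nonneg hs (le_of_lt (mul_pos hsa hsb))]

private lemma cot_lt_cot' {a b : ℝ} (ha : 0 < a) (hb : b < π) (hab : a < b) :
    Real.cot b < Real.cot a := by
  have hsa : 0 < Real.sin a := Real.sin_pos_of_pos_of_lt_pi ha (lt_trans hab hb)
  have hsb : 0 < Real.sin b := Real.sin_pos_of_pos_of_lt_pi (lt_trans ha hab) hb
  have hs : 0 < Real.sin (b - a) :=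
    Real.sin_pos_of_pos_of_lt_pi (by linarith) (by linarith)
  have := cot_diff (ne_of_gt hsa) (ne_of_gt hsb)
  nlinarith [div_pos hs (mul_pos hsa hsb)]

private lemma le_of_cot_le {a b : ℝ} (ha : 0 < a) (hb : 0 < b) (ha' : a < π) (_hb' : b < π)
    (h : Real.cot b ≤ Real.cot a) : a ≤ b := by
  by_contra hc
  push_neg at hc
  exact absurd (cot_lt_cot' hb ha' hc) (not_lt.mpr h)

private lemma cot_pi_sub (x : ℝ) : Real.cot (π - x) = -Real.cot x := by
  rw [Real.cot_eq_cos_div_sin, Real.cot_eq_cos_div_sin, Real.sin_pi_sub, Real.cos_pi_sub,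
    neg_div]

/-- Proposition 3.3: the hexagon cut out on the normal geodesic by a closed CMC Dupin
hypersurface with `g = 3` is a parallel hexagon. -/
theorem parallel_hexagon
    (s₁ s₂ s₃ s₄ s₅ s₆ H : ℝ)
    (hs₁ : 0 < s₁) (hs₂ : 0 < s₂) (hs₃ : 0 < s₃)
    (hs₄ : 0 < s₄) (hs₅ : 0 < s₅) (hs₆ : 0 < s₆)
    (hsum : s₁ + s₂ + s₃ + s₄ + s₅ + s₆ = π)
    (h13 : s₁ ≤ s₃) (h35 : s₃ ≤ s₅)
    (hCMC₁ : Real.cot s₁ + Real.cot (s₁ + s₂ + s₃)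
      + Real.cot (s₁ + s₂ + s₃ + s₄ + s₅) = H)
    (hCMC₂ : Real.cot s₁ + Real.cot (s₁ + s₆ + s₅)
      + Real.cot (s₁ + s₆ + s₅ + s₄ + s₃) = H)
    (hCMC₃ : Real.cot s₃ + Real.cot (s₃ + s₄ + s₅)
      + Real.cot (s₃ + s₄ + s₅ + s₆ + s₁) = H)
    (hCMC₄ : Real.cot s₃ + Real.cot (s₃ + s₂ + s₁)
      + Real.cot (s₃ + s₂ + s₁ + s₆ + s₅) = H)
    (hCMC₅ : Real.cot s₅ + Real.cot (s₅ + s₆ + s₁)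
      + Real.cot (s₅ + s₆ + s₁ + s₂ + s₃) = H)
    (hCMC₆ : Real.cot s₅ + Real.cot (s₅ + s₄ + s₃)
      + Real.cot (s₅ + s₄ + s₃ + s₂ + s₁) = H) :
    s₁ = s₃ ∧ s₃ = s₅ ∧ s₂ = s₄ ∧ s₄ = s₆ := by
  have hπ := Real.pi_pos
  -- rewrite the five-term sums via hsum
  have r1 : s₁ + s₂ + s₃ + s₄ + s₅ = π - s₆ := by linarith
  have r2 : s₅ + s₆ + s₁ + s₄ + s₃ = π - s₂ := by linarith
  have r3 : s₃ + s₄ + s₅ + s₆ + s₁ = π - s₂ := by linarith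
  have r4 : s₁ + s₂ + s₃ + s₆ + s₅ = π - s₄ := by linarith
  have r5 : s₅ + s₆ + s₁ + s₂ + s₃ = π - s₄ := by linarith
  have r6 : s₃ + s₄ + s₅ + s₂ + s₁ = π - s₆ := by linarith
  have m2 : s₁ + s₆ + s₅ = s₅ + s₆ + s₁ := by ring
  have m4 : s₃ + s₂ + s₁ = s₁ + s₂ + s₃ := by ring
  have m6 : s₅ + s₄ + s₃ = s₃ + s₄ + s₅ := by ring
  rw [r1, cot_pi_sub] at hCMC₁
  rw [m2, r2, cot_pi_sub] at hCMC₂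
  rw [r3, cot_pi_sub] at hCMC₃
  rw [m4, r4, cot_pi_sub] at hCMC₄
  rw [r5, cot_pi_sub] at hCMC₅
  rw [m6, r6, cot_pi_sub] at hCMC₆
  -- abbreviate
  set x := s₁ + s₂ + s₃ with hx
  set y := s₃ + s₄ + s₅ with hy
  set z := s₅ + s₆ + s₁ with hz
  have hx0 : 0 < x := by positivity
  have hy0 : 0 < y := by positivity
  have hz0 : 0 < z := by positivity
  have hxπ : x < π := by simp only [hx]; linarith
  have hyπ : y < π := by simp only [hy]; linarith
  have hzπ : z < π := by simp only [hz]; linarith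
  have h1π : s₁ < π := by linarith
  have h2π : s₂ < π := by linarith
  have h3π : s₃ < π := by linarith
  have h4π : s₄ < π := by linarith
  have h5π : s₅ < π := by linarith
  have h6π : s₆ < π := by linarith
  -- key linear relations among cotangents
  have c13 : Real.cot s₃ ≤ Real.cot s₁ := cot_le_cot' hs₁ h3π h13
  have c35 : Real.cot s₅ ≤ Real.cot s₃ := cot_le_cot' hs₃ h5π h35
  -- from equations 1 and 4 : cot s₄ ≤ cot s₆, hence s₆ ≤ s₄
  have h64 : s₆ ≤ s₄ := le_of_cot_le hs₆ hs₄ h6π h4π (by linarith)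
  -- from equations 3 and 6 : cot s₆ ≤ cot s₂, hence s₂ ≤ s₆
  have h26 : s₂ ≤ s₆ := le_of_cot_le hs₂ hs₆ h2π h6π (by linarith)
  -- from equations 5 and 6 : cot z ≤ cot y (since cot s₄ ≤ cot s₆), hence y ≤ z
  have c46 : Real.cot s₄ ≤ Real.cot s₆ := cot_le_cot' hs₆ h4π h64
  have hyz : y ≤ z := le_of_cot_le hy0 hz0 hyπ hzπ (by linarith)
  -- y ≤ z means s₃ + s₄ ≤ s₁ + s₆ ; combined with s₁ ≤ s₃, s₆ ≤ s₄ :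
  have e13 : s₁ = s₃ := by simp only [hy, hz] at hyz; linarith
  have e46 : s₄ = s₆ := by simp only [hy, hz] at hyz; linarith
  -- from equations 1 and 2 : cot x ≤ cot z (since cot s₂ ≥ cot s₆), hence z ≤ x
  have c26 : Real.cot s₆ ≤ Real.cot s₂ := cot_le_cot' hs₂ h6π h26
  have hzx : z ≤ x := le_of_cot_le hz0 hx0 hzπ hxπ (by linarith)
  have e35 : s₃ = s₅ := by simp only [hx, hz] at hzx; linarith
  have e26 : s₂ = s₆ := by simp only [hx, hz] at hzx; linarith
  exact ⟨e13, e35, by linarith, e46⟩
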